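/- For every r ≥ 1, every real t, and all real weights y_1,…,y_{2r+1}, one has det(I − T_r(−t·y)) = Σ_{m=0}^{r+1} t^m·Z_m^{G_r}(y), where T_r(−t·y) denotes the transfer matrix T_r(t·y) with t replaced by −t. -/

import Mathlib

/-- The edge set of the graph G_r: edges (1,2), (2r,2r+1), and
(2i,2i+1), (2i,2i+2), (2i+1,2i+2) for 1 ≤ i ≤ r−1. -/
def grEdges (r : ℕ) : Finset (ℕ × ℕ) :=
  {(1, 2), (2 * r, 2 * r + 1)} ∪
    (Finset.Icc 1 (r - 1)).biUnion fun i =>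
      {(2 * i, 2 * i + 1), (2 * i, 2 * i + 2), (2 * i + 1, 2 * i + 2)}

/-- Adjacency in the graph G_r. -/
def grAdj (r : ℕ) (a b : ℕ) : Prop := (a, b) ∈ grEdges r ∨ (b, a) ∈ grEdges r

instance (r a b : ℕ) : Decidable (grAdj r a b) :=
  inferInstanceAs (Decidable ((a, b) ∈ grEdges r ∨ (b, a) ∈ grEdges r))

/-- The hard-particle partition function Z_m^{G_r}(y). -/
noncomputable def hardZ (r m : ℕ) (y : ℕ → ℝ) : ℝ :=
  ∑ c ∈ (Finset.powersetCard m (Finset.Icc 1 (2 * r + 1))).filter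
      (fun c => ∀ a ∈ c, ∀ b ∈ c, ¬ grAdj r a b),
    ∏ i ∈ c, y i

/-- The transfer matrix T_r(t·y), a (2r+2)×(2r+2) matrix.  The index set
0 < 1 < 2 < 2' < 3 < 3' < ⋯ < r < r' < r+1 < r+2 is encoded by positions
in Fin (2r+2): vertex 0 ↦ 0, vertex 1 ↦ 1, vertex k ↦ 2k−2 and vertex
k' ↦ 2k−1 (2 ≤ k ≤ r), vertex r+1 ↦ 2r, vertex r+2 ↦ 2r+1.  The nonzero
entries are (T_r)_{k',k} = 1, (T_r)_{k,k'} = t·y_{2k−1} (k = 2,…,r);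
(T_r)_{k+1,k} = 1, (T_r)_{k,k+1} = t·y_{2k} (k = 1,…,r);
(T_r)_{1,0} = (T_r)_{r+2,r+1} = 1, (T_r)_{0,1} = t·y_1,
(T_r)_{r+1,r+2} = t·y_{2r+1}. -/
def Tmat (r : ℕ) (t : ℝ) (y : ℕ → ℝ) : Matrix (Fin (2 * r + 2)) (Fin (2 * r + 2)) ℝ :=
  Matrix.of fun p q =>
    if (p : ℕ) = (q : ℕ) + 1 ∧ ((q : ℕ) ≤ 1 ∨ (q : ℕ) % 2 = 0) then 1
    else if (p : ℕ) = (q : ℕ) + 2 ∧ (q : ℕ) % 2 = 0 ∧ 2 ≤ (q : ℕ) then 1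
    else if (q : ℕ) = (p : ℕ) + 1 ∧ ((p : ℕ) ≤ 1 ∨ (p : ℕ) % 2 = 0) then t * y ((p : ℕ) + 1)
    else if (q : ℕ) = (p : ℕ) + 2 ∧ (p : ℕ) % 2 = 0 ∧ 2 ≤ (p : ℕ) then t * y ((p : ℕ) + 2)
    else 0

namespace HardDet

def lo (v : ℕ) : ℕ := if v % 2 = 1 ∨ v = 2 then v - 1 else v - 2

lemma lo_eq (v : ℕ) :
    (lo v = v - 1 ∧ (v % 2 = 1 ∨ v = 2)) ∨ (lo v = v - 2 ∧ v % 2 = 0 ∧ v ≠ 2) := by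
  unfold lo; split_ifs with h
  · exact Or.inl ⟨rfl, h⟩
  · push_neg at h
    exact Or.inr ⟨rfl, by omega, h.2⟩

def Ov (a b : ℕ) : Prop := a = lo b ∨ b = lo a ∨ lo a = lo b

lemma mem_grEdges_iff (r a b : ℕ) : (a, b) ∈ grEdges r ↔
    (a = 1 ∧ b = 2) ∨ (a = 2 * r ∧ b = 2 * r + 1) ∨
      ∃ i, 1 ≤ i ∧ i ≤ r - 1 ∧
        ((a = 2 * i ∧ b = 2 * i + 1) ∨ (a = 2 * i ∧ b = 2 * i + 2) ∨
          (a = 2 * i + 1 ∧ b = 2 * i + 2)) := by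
  simp [grEdges, Finset.mem_union, Finset.mem_insert, Finset.mem_singleton,
    Finset.mem_biUnion, Finset.mem_Icc, Prod.ext_iff, and_assoc]

lemma grAdj_iff (r a b : ℕ) (hr : 1 ≤ r) (ha1 : 1 ≤ a) (ha2 : a ≤ 2 * r + 1)
    (hb1 : 1 ≤ b) (hb2 : b ≤ 2 * r + 1) (hab : a ≠ b) :
    grAdj r a b ↔ Ov a b := by
  have cons : ∀ c, 1 ≤ c → c + 1 ≤ 2 * r + 1 → (c, c + 1) ∈ grEdges r := by
    intro c h1 h2
    rw [mem_grEdges_iff]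
    by_cases hc1 : c = 1
    · exact Or.inl (by omega)
    by_cases hce : c % 2 = 0
    · by_cases hcr : c = 2 * r
      · exact Or.inr (Or.inl (by omega))
      · exact Or.inr (Or.inr ⟨c / 2, by omega, by omega, Or.inl (by omega)⟩)
    · exact Or.inr (Or.inr ⟨(c - 1) / 2, by omega, by omega, Or.inr (Or.inr (by omega))⟩)
  have skip : ∀ c, c % 2 = 0 → 2 ≤ c → c + 2 ≤ 2 * r + 1 → (c, c + 2) ∈ grEdges r := by
    intro c h1 h2 h3
    rw [mem_grEdges_iff]
    exact Or.inr (Or.inr ⟨c / 2, by omega, by omega, Or.inr (Or.inl (by omega))⟩)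
  constructor
  · rintro (h | h) <;> rw [mem_grEdges_iff] at h <;>
      [rcases h with ⟨h1, h2⟩ | ⟨h1, h2⟩ | ⟨i, hi1, hi2, h⟩;
       rcases h with ⟨h1, h2⟩ | ⟨h1, h2⟩ | ⟨i, hi1, hi2, h⟩] <;>
      rcases lo_eq a with ⟨e, he⟩ | ⟨e, he⟩ <;> rcases lo_eq b with ⟨f, hf⟩ | ⟨f, hf⟩ <;>
      unfold Ov <;> omega
  · intro hov
    have key : (a + 1 = b) ∨ (b + 1 = a) ∨ (a + 2 = b ∧ a % 2 = 0) ∨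
        (b + 2 = a ∧ b % 2 = 0) := by
      rcases lo_eq a with ⟨e, he⟩ | ⟨e, he⟩ <;> rcases lo_eq b with ⟨f, hf⟩ | ⟨f, hf⟩ <;>
        unfold Ov at hov <;> omega
    rcases key with h | h | ⟨h, hp⟩ | ⟨h, hp⟩
    · exact Or.inl (h ▸ cons a ha1 (by omega))
    · exact Or.inr (h ▸ cons b hb1 (by omega))
    · exact Or.inl (h ▸ skip a hp (by omega) (by omega))
    · exact Or.inr (h ▸ skip b hp (by omega) (by omega))

lemma grAdj_irrefl (r a : ℕ) : ¬ grAdj r a a := by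
  rintro (h | h) <;> rw [mem_grEdges_iff] at h <;>
    rcases h with ⟨h1, h2⟩ | ⟨h1, h2⟩ | ⟨i, hi1, hi2, h⟩ <;> omega


noncomputable def Mfun (t : ℝ) (y : ℕ → ℝ) (p q : ℕ) : ℝ :=
  if p = q then 1 else if q = lo p then -1 else if p = lo q then t * y q else 0

set_option maxHeartbeats 2000000 in
lemma entry (r : ℕ) (t : ℝ) (y : ℕ → ℝ) (p q : Fin (2 * r + 2)) :
    (1 - Tmat r (-t) y) p q = Mfun t y p.val q.val := by
  have hp := lo_eq p.val
  have hq := lo_eq q.val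
  simp only [Matrix.sub_apply, Matrix.one_apply, Tmat, Matrix.of_apply, Mfun,
    Fin.ext_iff]
  split_ifs <;>
    first
      | omega
      | (exfalso; omega)
      | (rw [show (q : ℕ) = (p : ℕ) + 1 by omega]; ring)
      | (rw [show (q : ℕ) = (p : ℕ) + 2 by omega]; ring)
      | norm_num



/-- Independent ("Ok") configurations, in overlap form. -/
def Ok (r : ℕ) (C : Finset ℕ) : Prop :=
  C ⊆ Finset.Icc 1 (2 * r + 1) ∧ ∀ a ∈ C, ∀ b ∈ C, a ≠ b → ¬ Ov a b

lemma Ok.mem_bounds {r : ℕ} {C : Finset ℕ} (h : Ok r C) {v : ℕ} (hv : v ∈ C) :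
    1 ≤ v ∧ v ≤ 2 * r + 1 := by
  have := h.1 hv; rwa [Finset.mem_Icc] at this

lemma Ok.subset {r : ℕ} {C D : Finset ℕ} (h : Ok r D) (hCD : C ⊆ D) : Ok r C :=
  ⟨hCD.trans h.1, fun a ha b hb hab => h.2 a (hCD ha) b (hCD hb) hab⟩

lemma Ok.empty (r : ℕ) : Ok r ∅ := ⟨Finset.empty_subset _, by simp⟩

/-- The involution attached to a configuration. -/
def g (C : Finset ℕ) (i : ℕ) : ℕ :=
  if i ∈ C then lo i
  else if i + 1 ∈ C ∧ lo (i + 1) = i then i + 1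
  else if i + 2 ∈ C ∧ lo (i + 2) = i then i + 2
  else i

lemma g_mem {C : Finset ℕ} {v : ℕ} (hv : v ∈ C) : g C v = lo v := if_pos hv

lemma g_lo {r : ℕ} {C : Finset ℕ} (h : Ok r C) {v : ℕ} (hv : v ∈ C) :
    g C (lo v) = v := by
  obtain ⟨hv1, hv2⟩ := h.mem_bounds hv
  have hlo := lo_eq v
  have hloC : lo v ∉ C := by
    intro hmem
    exact h.2 (lo v) hmem v hv (by omega) (Or.inl rfl)
  unfold g
  rw [if_neg hloC]
  rcases hlo with ⟨e, he⟩ | ⟨e, he⟩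
  · -- v = lo v + 1
    rw [if_pos ⟨by rw [show lo v + 1 = v by omega]; exact hv,
      by rw [show lo v + 1 = v by omega]⟩]
    omega
  · -- v = lo v + 2
    have hc2 : ¬ (lo v + 1 ∈ C ∧ lo (lo v + 1) = lo v) := by
      rintro ⟨hu, hul⟩
      exact h.2 (lo v + 1) hu v hv (by omega) (Or.inr (Or.inr (by omega)))
    rw [if_neg hc2, if_pos ⟨by rw [show lo v + 2 = v by omega]; exact hv,
      by rw [show lo v + 2 = v by omega]⟩]
    omega

lemma g_fix {C : Finset ℕ} {v : ℕ} (h1 : v ∉ C)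
    (h2 : ¬ (v + 1 ∈ C ∧ lo (v + 1) = v)) (h3 : ¬ (v + 2 ∈ C ∧ lo (v + 2) = v)) :
    g C v = v := by
  unfold g; rw [if_neg h1, if_neg h2, if_neg h3]

/-- Values of `g` on points untouched by the configuration. -/
lemma g_fix_of_ins {r : ℕ} {C : Finset ℕ} {v : ℕ} (h : Ok r (insert v C)) (hv : v ∉ C) :
    g C v = v ∧ g C (lo v) = lo v := by
  have hvI : v ∈ insert v C := Finset.mem_insert_self v C
  obtain ⟨hv1, hv2⟩ := h.mem_bounds hvI
  constructor
  · refine g_fix hv ?_ ?_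
    · rintro ⟨hu, hul⟩
      exact h.2 (v + 1) (Finset.mem_insert_of_mem hu) v hvI (by omega)
        (Or.inr (Or.inl hul.symm))
    · rintro ⟨hu, hul⟩
      exact h.2 (v + 2) (Finset.mem_insert_of_mem hu) v hvI (by omega)
        (Or.inr (Or.inl hul.symm))
  · have hlov : lo v < v := by rcases lo_eq v with ⟨e, he⟩ | ⟨e, he⟩ <;> omega
    refine g_fix ?_ ?_ ?_
    · intro hmem
      exact h.2 (lo v) (Finset.mem_insert_of_mem hmem) v hvI (by omega) (Or.inl rfl)
    · rintro ⟨hu, hul⟩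
      have hne : lo v + 1 ≠ v := fun he => hv (he ▸ hu)
      exact h.2 (lo v + 1) (Finset.mem_insert_of_mem hu) v hvI hne
        (Or.inr (Or.inr (by omega)))
    · rintro ⟨hu, hul⟩
      have hne : lo v + 2 ≠ v := fun he => hv (he ▸ hu)
      exact h.2 (lo v + 2) (Finset.mem_insert_of_mem hu) v hvI hne
        (Or.inr (Or.inr (by omega)))

lemma g_insert {C : Finset ℕ} {v j : ℕ} (h1 : j ≠ v) (h2 : j ≠ lo v) :
    g (insert v C) j = g C j := by
  have e1 : j ∈ insert v C ↔ j ∈ C := by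
    rw [Finset.mem_insert]; exact or_iff_right h1
  have e2 : (j + 1 ∈ insert v C ∧ lo (j + 1) = j) ↔ (j + 1 ∈ C ∧ lo (j + 1) = j) := by
    rw [Finset.mem_insert]
    constructor
    · rintro ⟨hv' | hc, hl⟩
      · exact absurd (hv' ▸ hl).symm h2
      · exact ⟨hc, hl⟩
    · rintro ⟨hc, hl⟩; exact ⟨Or.inr hc, hl⟩
  have e3 : (j + 2 ∈ insert v C ∧ lo (j + 2) = j) ↔ (j + 2 ∈ C ∧ lo (j + 2) = j) := by
    rw [Finset.mem_insert]
    constructor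
    · rintro ⟨hv' | hc, hl⟩
      · exact absurd (hv' ▸ hl).symm h2
      · exact ⟨hc, hl⟩
    · rintro ⟨hc, hl⟩; exact ⟨Or.inr hc, hl⟩
  unfold g
  rw [if_congr e1 rfl rfl, if_congr e2 rfl rfl, if_congr e3 rfl rfl]

lemma g_invol {r : ℕ} {C : Finset ℕ} (h : Ok r C) (i : ℕ) : g C (g C i) = i := by
  by_cases h1 : i ∈ C
  · rw [g_mem h1]; exact g_lo h h1
  by_cases h2 : i + 1 ∈ C ∧ lo (i + 1) = i
  · rw [show g C i = i + 1 by unfold g; rw [if_neg h1, if_pos h2], g_mem h2.1, h2.2]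
  by_cases h3 : i + 2 ∈ C ∧ lo (i + 2) = i
  · rw [show g C i = i + 2 by unfold g; rw [if_neg h1, if_neg h2, if_pos h3],
      g_mem h3.1, h3.2]
  · rw [g_fix h1 h2 h3, g_fix h1 h2 h3]

lemma g_lt {r : ℕ} {C : Finset ℕ} (h : Ok r C) {i : ℕ} (hi : i < 2 * r + 2) :
    g C i < 2 * r + 2 := by
  by_cases h1 : i ∈ C
  · rw [g_mem h1]; rcases lo_eq i with ⟨e, he⟩ | ⟨e, he⟩ <;> omega
  by_cases h2 : i + 1 ∈ C ∧ lo (i + 1) = i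
  · rw [show g C i = i + 1 by unfold g; rw [if_neg h1, if_pos h2]]
    have := h.mem_bounds h2.1; omega
  by_cases h3 : i + 2 ∈ C ∧ lo (i + 2) = i
  · rw [show g C i = i + 2 by unfold g; rw [if_neg h1, if_neg h2, if_pos h3]]
    have := h.mem_bounds h3.1; omega
  · rw [g_fix h1 h2 h3]; exact hi

lemma g_lt_self_iff {r : ℕ} {C : Finset ℕ} (h : Ok r C) (v : ℕ) :
    v ∈ C ↔ g C v < v := by
  constructor
  · intro hv
    rw [g_mem hv]
    have := h.mem_bounds hv
    rcases lo_eq v with ⟨e, he⟩ | ⟨e, he⟩ <;> omega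
  · intro hlt
    by_contra h1
    by_cases h2 : v + 1 ∈ C ∧ lo (v + 1) = v
    · rw [show g C v = v + 1 by unfold g; rw [if_neg h1, if_pos h2]] at hlt; omega
    by_cases h3 : v + 2 ∈ C ∧ lo (v + 2) = v
    · rw [show g C v = v + 2 by unfold g; rw [if_neg h1, if_neg h2, if_pos h3]] at hlt
      omega
    · rw [g_fix h1 h2 h3] at hlt; omega

section Perm

variable {r : ℕ}

/-- `g` as a self-map of `Fin (2r+2)`. -/
def gF (r : ℕ) (C : Finset ℕ) : Fin (2 * r + 2) → Fin (2 * r + 2) :=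
  fun i => if h : g C i.val < 2 * r + 2 then ⟨g C i.val, h⟩ else i

lemma gF_val {C : Finset ℕ} (h : Ok r C) (i : Fin (2 * r + 2)) :
    ((gF r C i) : ℕ) = g C i.val := by
  rw [gF, dif_pos (g_lt h i.isLt)]

lemma gF_invol {C : Finset ℕ} (h : Ok r C) : Function.Involutive (gF r C) := by
  intro i; apply Fin.ext; rw [gF_val h, gF_val h, g_invol h]

open Classical in
noncomputable def permOf (r : ℕ) (C : Finset ℕ) : Equiv.Perm (Fin (2 * r + 2)) :=
  if h : Function.Involutive (gF r C) then h.toPerm else 1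

lemma permOf_val {C : Finset ℕ} (h : Ok r C) (i : Fin (2 * r + 2)) :
    ((permOf r C) i : ℕ) = g C i.val := by
  rw [permOf]
  rw [dif_pos (gF_invol h)]
  exact gF_val h i

lemma g_empty (i : ℕ) : g ∅ i = i := by simp [g]

lemma permOf_empty (r : ℕ) : permOf r ∅ = 1 := by
  apply Equiv.ext; intro i
  apply Fin.ext
  rw [permOf_val (Ok.empty r) i, g_empty]
  rfl

lemma permOf_insert {C : Finset ℕ} {v : ℕ} (h : Ok r (insert v C)) (hvC : v ∉ C)
    (hv1 : 1 ≤ v) (hv2 : v ≤ 2 * r + 1) :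
    permOf r (insert v C) = permOf r C *
      Equiv.swap ⟨lo v, by have := lo_eq v; omega⟩ ⟨v, by omega⟩ := by
  have hOkC : Ok r C := h.subset (Finset.subset_insert v C)
  have hfix := g_fix_of_ins h hvC
  have hlov : lo v < v := by have := lo_eq v; omega
  set a : Fin (2 * r + 2) := ⟨lo v, by have := lo_eq v; omega⟩ with ha
  set b : Fin (2 * r + 2) := ⟨v, by omega⟩ with hb
  apply Equiv.ext; intro i
  apply Fin.ext
  rw [permOf_val h i, Equiv.Perm.mul_apply]
  rcases eq_or_ne i b with rfl | hib
  · rw [Equiv.swap_apply_right, permOf_val hOkC]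
    show g (insert v C) v = g C (lo v)
    rw [hfix.2, g_mem (Finset.mem_insert_self v C)]
  rcases eq_or_ne i a with rfl | hia
  · rw [Equiv.swap_apply_left, permOf_val hOkC]
    show g (insert v C) (lo v) = g C v
    rw [hfix.1, g_lo h (Finset.mem_insert_self v C)]
  · rw [Equiv.swap_apply_of_ne_of_ne hia hib, permOf_val hOkC]
    exact g_insert (fun hh => hib (Fin.ext hh)) (fun hh => hia (Fin.ext hh))

lemma term_eq (r : ℕ) (t : ℝ) (y : ℕ → ℝ) :
    ∀ C : Finset ℕ, Ok r C →
      ((Equiv.Perm.sign (permOf r C) : ℤ) : ℝ) *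
          ∏ i : Fin (2 * r + 2), Mfun t y ((permOf r C i) : ℕ) (i : ℕ) =
        t ^ C.card * ∏ v ∈ C, y v := by
  intro C
  induction C using Finset.induction_on with
  | empty =>
      intro _
      rw [permOf_empty]
      simp [Mfun, Equiv.Perm.one_apply]
  | @insert v C hvC ih =>
      intro h
      have hOkC : Ok r C := h.subset (Finset.subset_insert v C)
      have ih' := ih hOkC
      obtain ⟨hv1, hv2⟩ := h.mem_bounds (Finset.mem_insert_self v C)
      have hfix := g_fix_of_ins h hvC
      have hlov : lo v < v := by have := lo_eq v; omega
      set a : Fin (2 * r + 2) := ⟨lo v, by have := lo_eq v; omega⟩ with ha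
      set b : Fin (2 * r + 2) := ⟨v, by omega⟩ with hb
      have hab : a ≠ b := by
        intro hh
        have := congrArg Fin.val hh
        simp only [ha, hb] at this
        omega
      have hins : permOf r (insert v C) = permOf r C * Equiv.swap a b :=
        permOf_insert h hvC hv1 hv2
      rw [hins, Finset.card_insert_of_notMem hvC, Finset.prod_insert hvC]
      have hsplit : ∀ σ : Equiv.Perm (Fin (2 * r + 2)),
          (∏ i : Fin (2 * r + 2), Mfun t y ((σ i) : ℕ) (i : ℕ))
            = Mfun t y ((σ a) : ℕ) (a : ℕ) * (Mfun t y ((σ b) : ℕ) (b : ℕ)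
              * ∏ i ∈ (Finset.univ.erase a).erase b, Mfun t y ((σ i) : ℕ) (i : ℕ)) := by
        intro σ
        rw [← Finset.mul_prod_erase Finset.univ _ (Finset.mem_univ a),
          ← Finset.mul_prod_erase (Finset.univ.erase a) _
            (Finset.mem_erase.mpr ⟨hab.symm, Finset.mem_univ b⟩)]
      rw [hsplit] at ih' ⊢
      have hga : (((permOf r C * Equiv.swap a b) a) : ℕ) = v := by
        rw [Equiv.Perm.mul_apply, Equiv.swap_apply_left, permOf_val hOkC]
        exact hfix.1
      have hgb : (((permOf r C * Equiv.swap a b) b) : ℕ) = lo v := by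
        rw [Equiv.Perm.mul_apply, Equiv.swap_apply_right, permOf_val hOkC]
        exact hfix.2
      have hca : ((permOf r C a) : ℕ) = lo v := by
        rw [permOf_val hOkC]; exact hfix.2
      have hcb : ((permOf r C b) : ℕ) = v := by
        rw [permOf_val hOkC]; exact hfix.1
      have hrest : ∏ i ∈ (Finset.univ.erase a).erase b,
            Mfun t y (((permOf r C * Equiv.swap a b) i) : ℕ) (i : ℕ)
          = ∏ i ∈ (Finset.univ.erase a).erase b,
            Mfun t y ((permOf r C i) : ℕ) (i : ℕ) := by
        refine Finset.prod_congr rfl (fun i hi => ?_)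
        rw [Finset.mem_erase, Finset.mem_erase] at hi
        rw [Equiv.Perm.mul_apply, Equiv.swap_apply_of_ne_of_ne hi.2.1 hi.1]
      have hav : (a : ℕ) = lo v := rfl
      have hbv : (b : ℕ) = v := rfl
      rw [hga, hgb, hrest, hav, hbv]
      rw [hca, hcb, hav, hbv] at ih'
      have m1 : Mfun t y v (lo v) = -1 := by
        unfold Mfun; rw [if_neg (by omega), if_pos rfl]
      have m2 : Mfun t y (lo v) v = t * y v := by
        have hll := lo_eq (lo v)
        unfold Mfun
        rw [if_neg (by omega), if_neg (by omega), if_pos rfl]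
      have m3 : Mfun t y (lo v) (lo v) = 1 := if_pos rfl
      rw [m1, m2]
      have m4 : Mfun t y v v = 1 := if_pos rfl
      rw [m3, m4] at ih'
      rw [Equiv.Perm.sign_mul, Equiv.Perm.sign_swap hab]
      push_cast [Units.val_mul]
      linear_combination (t * y v) * ih'

lemma Mfun_ne {t : ℝ} {y : ℕ → ℝ} {p q : ℕ} (h : Mfun t y p q ≠ 0) :
    p = q ∨ q = lo p ∨ p = lo q := by
  unfold Mfun at h
  split_ifs at h with h1 h2 h3
  · exact Or.inl h1
  · exact Or.inr (Or.inl h2)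
  · exact Or.inr (Or.inr h3)
  · exact absurd rfl h

lemma Mfun_diag (t : ℝ) (y : ℕ → ℝ) (p : ℕ) : Mfun t y p p = 1 := if_pos rfl

lemma surj (r : ℕ) (t : ℝ) (y : ℕ → ℝ) :
    ∀ k, ∀ σ : Equiv.Perm (Fin (2 * r + 2)), σ.support.card ≤ k →
      (∀ i, Mfun t y ((σ i) : ℕ) (i : ℕ) ≠ 0) → ∃ C, Ok r C ∧ σ = permOf r C := by
  intro k
  induction k with
  | zero =>
      intro σ hcard _
      have h0 : σ.support = ∅ := Finset.card_eq_zero.mp (le_antisymm hcard (Nat.zero_le _))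
      have hσ : σ = 1 := Equiv.Perm.support_eq_empty_iff.mp h0
      exact ⟨∅, Ok.empty r, by rw [hσ, permOf_empty]⟩
  | succ k IH =>
      intro σ hcard hM
      by_cases h1 : σ = 1
      · exact ⟨∅, Ok.empty r, by rw [h1, permOf_empty]⟩
      have hne : σ.support.Nonempty := by
        rw [Finset.nonempty_iff_ne_empty, Ne, Equiv.Perm.support_eq_empty_iff]
        exact h1
      set i := σ.support.max' hne with hidef
      have hisup : i ∈ σ.support := σ.support.max'_mem hne
      have hii : σ i ≠ i := Equiv.Perm.mem_support.mp hisup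
      have hσlt : ((σ i) : ℕ) < (i : ℕ) := by
        rcases lt_or_ge ((σ i : ℕ)) (i : ℕ) with hlt | hge
        · exact hlt
        · exfalso
          have hnot : σ i ∉ σ.support := by
            intro hmem
            have hle := σ.support.le_max' (σ i) hmem
            rw [← hidef, Fin.le_def] at hle
            exact hii (Fin.ext (le_antisymm hle hge))
          have := Equiv.Perm.notMem_support.mp hnot
          exact hii (σ.injective this)
      have hvi : ((σ i) : ℕ) = lo (i : ℕ) := by
        rcases Mfun_ne (hM i) with h | h | h
        · exact absurd (Fin.ext h) hii
        · exfalso; have := lo_eq ((σ i : ℕ)); omega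
        · exact h
      have hi1 : 1 ≤ (i : ℕ) := by omega
      have hMj := hM (σ⁻¹ i)
      rw [show σ (σ⁻¹ i) = i from σ.apply_symm_apply i] at hMj
      have hji : σ⁻¹ i ≠ i := by
        intro hh
        have h2 := congrArg σ hh
        rw [Equiv.Perm.coe_inv, Equiv.apply_symm_apply] at h2
        exact hii h2.symm
      have hjsup : σ⁻¹ i ∈ σ.support := by
        rw [Equiv.Perm.mem_support, Equiv.Perm.coe_inv, Equiv.apply_symm_apply]
        exact fun hh => hji hh.symm
      have hjlt : ((σ⁻¹ i) : ℕ) < (i : ℕ) := by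
        have hle := σ.support.le_max' _ hjsup
        rw [← hidef, Fin.le_def] at hle
        have : ((σ⁻¹ i) : ℕ) ≠ (i : ℕ) := fun hh => hji (Fin.ext hh)
        omega
      have hvj : ((σ⁻¹ i) : ℕ) = lo (i : ℕ) := by
        rcases Mfun_ne hMj with h | h | h
        · omega
        · exact h
        · exfalso; have := lo_eq ((σ⁻¹ i : ℕ)); omega
      have hfixpt : σ (σ i) = i := by
        have heq : σ⁻¹ i = σ i := Fin.ext (hvj.trans hvi.symm)
        rw [← heq, Equiv.Perm.coe_inv, Equiv.apply_symm_apply]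
      set a := σ i with hadef
      have hai : a ≠ i := hii
      set σ' := σ * Equiv.swap a i with hσ'def
      have hσ'i : σ' i = i := by
        rw [hσ'def, Equiv.Perm.mul_apply, Equiv.swap_apply_right]
        exact hfixpt
      have hσ'a : σ' a = a := by
        rw [hσ'def, Equiv.Perm.mul_apply, Equiv.swap_apply_left]
      have hσ'other : ∀ j, j ≠ a → j ≠ i → σ' j = σ j := by
        intro j hja hji'
        rw [hσ'def, Equiv.Perm.mul_apply, Equiv.swap_apply_of_ne_of_ne hja hji']
      have hM' : ∀ j, Mfun t y ((σ' j) : ℕ) (j : ℕ) ≠ 0 := by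
        intro j
        rcases eq_or_ne j i with rfl | hji'
        · rw [hσ'i, Mfun_diag]; exact one_ne_zero
        rcases eq_or_ne j a with rfl | hja
        · rw [hσ'a, Mfun_diag]; exact one_ne_zero
        · rw [hσ'other j hja hji']; exact hM j
      have hsupp : σ'.support = σ.support \ {a, i} := by
        ext j
        rw [Equiv.Perm.mem_support, Finset.mem_sdiff, Equiv.Perm.mem_support,
          Finset.mem_insert, Finset.mem_singleton]
        rcases eq_or_ne j i with rfl | hji'
        · simp [hσ'i]
        rcases eq_or_ne j a with rfl | hja
        · simp [hσ'a]
        · rw [hσ'other j hja hji']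
          simp [hja, hji']
      have hacard : σ'.support.card ≤ k := by
        have hsub : ({a, i} : Finset (Fin (2 * r + 2))) ⊆ σ.support := by
          intro x hx
          rw [Finset.mem_insert, Finset.mem_singleton] at hx
          rcases hx with rfl | rfl
          · rw [Equiv.Perm.mem_support, hfixpt]
            exact fun hh => hai hh.symm
          · exact hisup
        have hc2 : ({a, i} : Finset (Fin (2 * r + 2))).card = 2 := by
          rw [Finset.card_insert_of_notMem (by simpa using hai), Finset.card_singleton]
        rw [hsupp, Finset.card_sdiff_of_subset hsub, hc2]
        omega
      obtain ⟨C', hOk', hσ'C⟩ := IH σ' hacard hM'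
      have hkey : ∀ c ∈ C', c ≠ (i : ℕ) ∧ c ≠ lo (i : ℕ) ∧ lo c ≠ (i : ℕ) ∧
          lo c ≠ lo (i : ℕ) := by
        intro c hc
        obtain ⟨hc1, hc2⟩ := hOk'.mem_bounds hc
        have hlc : lo c < c := by have := lo_eq c; omega
        have hcm : (⟨c, by omega⟩ : Fin (2 * r + 2)) ∈ σ'.support := by
          rw [Equiv.Perm.mem_support, hσ'C]
          intro hh
          have hval := congrArg Fin.val hh
          rw [permOf_val hOk'] at hval
          have hval' : g C' c = c := hval
          rw [g_mem hc] at hval'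
          omega
        have hlm : (⟨lo c, by omega⟩ : Fin (2 * r + 2)) ∈ σ'.support := by
          rw [Equiv.Perm.mem_support, hσ'C]
          intro hh
          have hval := congrArg Fin.val hh
          rw [permOf_val hOk'] at hval
          have hval' : g C' (lo c) = lo c := hval
          rw [g_lo hOk' hc] at hval'
          omega
        rw [hsupp, Finset.mem_sdiff, Finset.mem_insert, Finset.mem_singleton] at hcm hlm
        have e1 : c ≠ (a : ℕ) ∧ c ≠ (i : ℕ) := by
          constructor <;> intro hh <;> [exact hcm.2 (Or.inl (Fin.ext hh));
            exact hcm.2 (Or.inr (Fin.ext hh))]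
        have e2 : lo c ≠ (a : ℕ) ∧ lo c ≠ (i : ℕ) := by
          constructor <;> intro hh <;> [exact hlm.2 (Or.inl (Fin.ext hh));
            exact hlm.2 (Or.inr (Fin.ext hh))]
        refine ⟨e1.2, ?_, e2.2, ?_⟩
        · rw [← hvi]; exact e1.1
        · rw [← hvi]; exact e2.1
      have hiC' : (i : ℕ) ∉ C' := fun hc => (hkey _ hc).1 rfl
      have hOkI : Ok r (insert (i : ℕ) C') := by
        constructor
        · intro x hx
          rw [Finset.mem_insert] at hx
          rcases hx with rfl | hx
          · rw [Finset.mem_Icc]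
            have := i.isLt
            omega
          · exact hOk'.1 hx
        · intro x hx z hz hxz
          rw [Finset.mem_insert] at hx hz
          rcases hx with rfl | hx <;> rcases hz with rfl | hz
          · exact absurd rfl hxz
          · obtain ⟨k1, k2, k3, k4⟩ := hkey z hz
            rintro (hov | hov | hov) <;> omega
          · obtain ⟨k1, k2, k3, k4⟩ := hkey x hx
            rintro (hov | hov | hov) <;> omega
          · exact hOk'.2 x hx z hz hxz
      refine ⟨insert (i : ℕ) C', hOkI, ?_⟩
      rw [permOf_insert hOkI hiC' hi1 (by have := i.isLt; omega), ← hσ'C]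
      have hsw : ∀ (p1 : lo (i : ℕ) < 2 * r + 2) (p2 : (i : ℕ) < 2 * r + 2),
          Equiv.swap (⟨lo (i : ℕ), p1⟩ : Fin (2 * r + 2)) ⟨(i : ℕ), p2⟩
            = Equiv.swap a i := by
        intro p1 p2
        congr 1
        exact Fin.ext hvi.symm
      rw [hsw, hσ'def, mul_assoc, Equiv.swap_mul_self, mul_one]

lemma card_le {r : ℕ} {C : Finset ℕ} (h : Ok r C) : C.card ≤ r + 1 := by
  have hdisj : ∀ a ∈ C, ∀ b ∈ C, a ≠ b →
      Disjoint ({lo a, a} : Finset ℕ) {lo b, b} := by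
    intro a ha b hb hab
    rw [Finset.disjoint_left]
    intro x hx hx'
    rw [Finset.mem_insert, Finset.mem_singleton] at hx hx'
    apply h.2 a ha b hb hab
    unfold Ov
    rcases hx with rfl | rfl <;> rcases hx' with hh | hh
    · exact Or.inr (Or.inr hh)
    · exact Or.inr (Or.inl hh.symm)
    · exact Or.inl hh
    · exact absurd hh hab
  have hcard : (C.biUnion fun v => ({lo v, v} : Finset ℕ)).card = 2 * C.card := by
    rw [Finset.card_biUnion hdisj]
    calc (∑ v ∈ C, ({lo v, v} : Finset ℕ).card) = ∑ _v ∈ C, 2 :=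
          Finset.sum_congr rfl (fun v hv => by
            have h1 := h.mem_bounds hv
            have h2 := lo_eq v
            rw [Finset.card_insert_of_notMem (by rw [Finset.mem_singleton]; omega),
              Finset.card_singleton])
      _ = 2 * C.card := by rw [Finset.sum_const, smul_eq_mul, mul_comm]
  have hsub : (C.biUnion fun v => ({lo v, v} : Finset ℕ)) ⊆ Finset.range (2 * r + 2) := by
    intro x hx
    rw [Finset.mem_biUnion] at hx
    obtain ⟨v, hv, hxv⟩ := hx
    rw [Finset.mem_insert, Finset.mem_singleton] at hxv
    have h1 := h.mem_bounds hv
    have h2 := lo_eq v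
    rw [Finset.mem_range]
    omega
  have := Finset.card_le_card hsub
  rw [hcard, Finset.card_range] at this
  omega

end Perm


end HardDet

/-- det(I − T_r(−t·y)) is the hard-particle generating polynomial. -/
theorem det_transfer_eq_hardZ (r : ℕ) (hr : 1 ≤ r) (t : ℝ) (y : ℕ → ℝ) :
    (1 - Tmat r (-t) y).det = ∑ m ∈ Finset.range (r + 2), t ^ m * hardZ r m y := by
  have hmem_ok : ∀ C : Finset ℕ,
      (C ∈ (Finset.Icc 1 (2 * r + 1)).powerset.filter
        (fun c => ∀ a ∈ c, ∀ b ∈ c, ¬ grAdj r a b)) ↔ HardDet.Ok r C := by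
    intro C
    rw [Finset.mem_filter, Finset.mem_powerset]
    constructor
    · rintro ⟨hsub, hadj⟩
      refine ⟨hsub, fun a ha b hb hab hov => ?_⟩
      have hba := hsub ha
      have hbb := hsub hb
      rw [Finset.mem_Icc] at hba hbb
      exact hadj a ha b hb
        ((HardDet.grAdj_iff r a b hr hba.1 hba.2 hbb.1 hbb.2 hab).mpr hov)
    · rintro ⟨hsub, hov⟩
      refine ⟨hsub, fun a ha b hb hadj => ?_⟩
      rcases eq_or_ne a b with rfl | hab
      · exact HardDet.grAdj_irrefl r a hadj
      · have hba := hsub ha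
        have hbb := hsub hb
        rw [Finset.mem_Icc] at hba hbb
        exact hov a ha b hb hab
          ((HardDet.grAdj_iff r a b hr hba.1 hba.2 hbb.1 hbb.2 hab).mp hadj)
  set okSets : Finset (Finset ℕ) := (Finset.Icc 1 (2 * r + 1)).powerset.filter
      (fun c => ∀ a ∈ c, ∀ b ∈ c, ¬ grAdj r a b) with hok
  rw [Matrix.det_apply']
  have step1 : (∑ σ : Equiv.Perm (Fin (2 * r + 2)),
        ((Equiv.Perm.sign σ : ℤ) : ℝ) * ∏ i, (1 - Tmat r (-t) y) (σ i) i)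
      = ∑ σ : Equiv.Perm (Fin (2 * r + 2)), ((Equiv.Perm.sign σ : ℤ) : ℝ) *
          ∏ i, HardDet.Mfun t y ((σ i) : ℕ) (i : ℕ) := by
    refine Finset.sum_congr rfl fun σ _ => ?_
    rw [Finset.prod_congr rfl fun i _ => HardDet.entry r t y (σ i) i]
  rw [step1]
  have hinj : ∀ C ∈ okSets, ∀ D ∈ okSets,
      HardDet.permOf r C = HardDet.permOf r D → C = D := by
    intro C hC D hD hPD
    have hOkC := (hmem_ok C).mp hC
    have hOkD := (hmem_ok D).mp hD
    ext v
    by_cases hv : v ≤ 2 * r + 1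
    · rw [HardDet.g_lt_self_iff hOkC v, HardDet.g_lt_self_iff hOkD v]
      have hg : HardDet.g C v = HardDet.g D v := by
        have h2 := congrArg (fun σ : Equiv.Perm (Fin (2 * r + 2)) =>
          ((σ ⟨v, by omega⟩ : Fin (2 * r + 2)) : ℕ)) hPD
        try simp only at h2
        rw [HardDet.permOf_val hOkC, HardDet.permOf_val hOkD] at h2
        exact h2
      rw [hg]
    · constructor <;> intro hmem
      · exact absurd (hOkC.mem_bounds hmem).2 hv
      · exact absurd (hOkD.mem_bounds hmem).2 hv
  have hzero : ∀ σ ∈ (Finset.univ : Finset (Equiv.Perm (Fin (2 * r + 2)))),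
      σ ∉ okSets.image (HardDet.permOf r) →
      ((Equiv.Perm.sign σ : ℤ) : ℝ) * ∏ i, HardDet.Mfun t y ((σ i) : ℕ) (i : ℕ) = 0 := by
    intro σ _ hσ
    by_contra hne
    have hprod : (∏ i, HardDet.Mfun t y ((σ i) : ℕ) (i : ℕ)) ≠ 0 :=
      fun hz => hne (by rw [hz, mul_zero])
    have hfac : ∀ i, HardDet.Mfun t y ((σ i) : ℕ) (i : ℕ) ≠ 0 := fun i =>
      Finset.prod_ne_zero_iff.mp hprod i (Finset.mem_univ i)
    obtain ⟨C, hOkC, hC⟩ := HardDet.surj r t y σ.support.card σ le_rfl hfac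
    exact hσ (Finset.mem_image.mpr ⟨C, (hmem_ok C).mpr hOkC, hC.symm⟩)
  rw [← Finset.sum_subset (Finset.subset_univ (okSets.image (HardDet.permOf r))) hzero,
    Finset.sum_image hinj]
  have step2 : ∑ C ∈ okSets, ((Equiv.Perm.sign (HardDet.permOf r C) : ℤ) : ℝ) *
        ∏ i, HardDet.Mfun t y ((HardDet.permOf r C i) : ℕ) (i : ℕ)
      = ∑ C ∈ okSets, t ^ C.card * ∏ v ∈ C, y v :=
    Finset.sum_congr rfl fun C hC => HardDet.term_eq r t y C ((hmem_ok C).mp hC)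
  rw [step2]
  rw [← Finset.sum_fiberwise_of_maps_to (g := Finset.card) (t := Finset.range (r + 2))
    (fun C hC => Finset.mem_range.mpr (by
      have := HardDet.card_le ((hmem_ok C).mp hC); omega))]
  refine Finset.sum_congr rfl fun m _ => ?_
  rw [hardZ, Finset.mul_sum]
  have hsets : okSets.filter (fun C => C.card = m)
      = (Finset.powersetCard m (Finset.Icc 1 (2 * r + 1))).filter
          (fun c => ∀ a ∈ c, ∀ b ∈ c, ¬ grAdj r a b) := by
    rw [hok, Finset.powersetCard_eq_filter, Finset.filter_comm]
  rw [hsets]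
  refine Finset.sum_congr rfl fun C hC => ?_
  rw [Finset.mem_filter, Finset.mem_powersetCard] at hC
  rw [hC.1.2]
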